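/- Let 𝕜 be ℝ or ℂ, m₁ < m₂ < ⋯ < m_r < m positive integers, F an m-dimensional inner product space over 𝕜 with orthonormal basis (f₁,…,f_m), σ = (σ₁,…,σ_r) with each σ_k an elementary Schubert symbol of type (m_k,m_{k+1}) (m_{r+1} = m), and φ : ∏_{k=1}^{r−1} V(m_k,m_{k+1}) × V(m_r,F) → V(m₁,F) the composition map (u₁,…,u_r) ↦ u_r⋯u₂u₁. Then (1) φ maps ∏_{k=1}^{r−1} V_{σ_k}(m_k,m_{k+1}) × V_{σ_r}(m_r,F) into V_{σ_r⋯σ₂σ₁}(m₁,F); and (2) φ maps ∂V_{σ₁}(m₁,m₂) × ∏_{k=2}^{r−1} V_{σ_k}(m_k,m_{k+1}) × V_{σ_r}(m_r,F) into ∂V_{σ_r⋯σ₂σ₁}(m₁,F). -/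

import Mathlib

open scoped InnerProductSpace

noncomputable section

/-- `e` is an open cell in `X` with characteristic map `f : Dⁿ → X`:
`f` is continuous on the closed unit ball, and restricts to a homeomorphism
(i.e. an embedding) of the open unit ball onto `e`. -/
def IsCellMap {X : Type*} [TopologicalSpace X] {n : ℕ}
    (f : EuclideanSpace ℝ (Fin n) → X) (e : Set X) : Prop :=
  ContinuousOn f (Metric.closedBall 0 1) ∧
  Topology.IsEmbedding ((Metric.ball (0 : EuclideanSpace ℝ (Fin n)) 1).restrict f) ∧
  f '' Metric.ball 0 1 = e

/-- `e` is an open cell of dimension `n` in `X`. -/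
def IsOpenCell {X : Type*} [TopologicalSpace X] (e : Set X) (n : ℕ) : Prop :=
  ∃ f : EuclideanSpace ℝ (Fin n) → X, IsCellMap f e

/-- The Stiefel manifold of inner-product-preserving linear maps `𝕜ⁿ → N`,
topologized as a subspace of the normed space of continuous linear maps. -/
abbrev Stiefel (𝕜 : Type*) [RCLike 𝕜] (n : ℕ) (N : Type*) [NormedAddCommGroup N]
    [InnerProductSpace 𝕜 N] : Type _ :=
  { u : EuclideanSpace 𝕜 (Fin n) →L[𝕜] N // ∀ x y, (inner 𝕜 (u x) (u y) : 𝕜) = inner 𝕜 x y }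

variable (𝕜 : Type*) [RCLike 𝕜]

/-- `E_k`: the span of the first `k+1` standard basis vectors (`0`-based index `k`). -/
def Ek (n : ℕ) (k : Fin n) : Submodule 𝕜 (EuclideanSpace 𝕜 (Fin n)) :=
  Submodule.span 𝕜 {x | ∃ i : Fin n, i ≤ k ∧ x = EuclideanSpace.single i (1 : 𝕜)}

/-- The Schubert cell `V_σ(n,N)` in the Stiefel manifold, relative to the orthonormal
basis `b` of `N`. -/
def VCell {n m : ℕ} {N : Type*} [NormedAddCommGroup N] [InnerProductSpace 𝕜 N]
    (b : OrthonormalBasis (Fin m) 𝕜 N) (σ : Fin n → Fin m) : Set (Stiefel 𝕜 n N) :=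
  { u | ∀ k : Fin n,
      (∀ x ∈ Ek 𝕜 n k, u.1 x ∈ Submodule.span 𝕜 (⇑b '' {j : Fin m | j ≤ σ k})) ∧
      ∃ r : ℝ, 0 < r ∧ (inner 𝕜 (u.1 (EuclideanSpace.single k (1 : 𝕜))) (b (σ k)) : 𝕜) = (r : 𝕜) }

/-- The dimension `d(σ) = Σₖ (σ(k) - k)` of an elementary Schubert symbol. -/
def dSigma {n m : ℕ} (σ : Fin n → Fin m) : ℕ := ∑ k : Fin n, ((σ k : ℕ) - (k : ℕ))

/-- The equivalence relation on `V(n,H)` identifying maps with the same image. -/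
def grassmannSetoid (n : ℕ) (H : Type*) [NormedAddCommGroup H] [InnerProductSpace 𝕜 H] :
    Setoid (Stiefel 𝕜 n H) :=
  ⟨fun u v => LinearMap.range ((u.1 : EuclideanSpace 𝕜 (Fin n) →L[𝕜] H) : EuclideanSpace 𝕜 (Fin n) →ₗ[𝕜] H) =
    LinearMap.range (v.1 : EuclideanSpace 𝕜 (Fin n) →ₗ[𝕜] H),
   ⟨fun _ => rfl, Eq.symm, Eq.trans⟩⟩

/-- The Grassmann manifold `G(n,H)` with the quotient topology. -/
abbrev Grassmann (n : ℕ) (H : Type*) [NormedAddCommGroup H] [InnerProductSpace 𝕜 H] : Type _ :=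
  Quotient (grassmannSetoid 𝕜 n H)

/-- A point of `G(n,H)` as an `n`-dimensional subspace of `H`. -/
def Grassmann.rangeOf {n : ℕ} {H : Type*} [NormedAddCommGroup H] [InnerProductSpace 𝕜 H] :
    Grassmann 𝕜 n H → Submodule 𝕜 H :=
  Quotient.lift (fun u => LinearMap.range (u.1 : EuclideanSpace 𝕜 (Fin n) →ₗ[𝕜] H)) (fun _ _ h => h)

/-- The (1-based) Schubert symbol `σ_X(k) = min { i : dim (X ∩ F i) ≥ k }` of a
subspace `X` relative to a flag `F`. -/
def schubertSigma {K W : Type*} [Ring K] [AddCommGroup W] [Module K W]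
    (X : Submodule K W) (F : ℕ → Submodule K W) (k : ℕ) : ℕ :=
  sInf {i : ℕ | k ≤ Module.finrank K ↥(X ⊓ F i)}

/-- The complete flag associated to an (ordered) orthonormal basis:
`basisFlag b i = span(b₁, …, b_i)` (1-based `i`). -/
def basisFlag {m : ℕ} {N : Type*} [NormedAddCommGroup N] [InnerProductSpace 𝕜 N]
    (b : OrthonormalBasis (Fin m) 𝕜 N) (i : ℕ) : Submodule 𝕜 N :=
  Submodule.span 𝕜 (⇑b '' {j : Fin m | (j : ℕ) < i})

/-- The Schubert cell `G_σ(n,H)` inside the Grassmannian of `n`-dimensional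
subspaces of `H`, viewed as a set of submodules. -/
def GCellSub {n m : ℕ} {H : Type*} [NormedAddCommGroup H] [InnerProductSpace 𝕜 H]
    (b : OrthonormalBasis (Fin m) 𝕜 H) (σ : Fin n → Fin m) : Set (Submodule 𝕜 H) :=
  { X | Module.finrank 𝕜 ↥X = n ∧
        ∀ k : Fin n, schubertSigma X (basisFlag 𝕜 b) ((k : ℕ) + 1) = (σ k : ℕ) + 1 }

/-- The Schubert cell `G_σ(n,H)` as a subset of the Grassmann manifold. -/
def GCell {n m : ℕ} {H : Type*} [NormedAddCommGroup H] [InnerProductSpace 𝕜 H]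
    (b : OrthonormalBasis (Fin m) 𝕜 H) (σ : Fin n → Fin m) : Set (Grassmann 𝕜 n H) :=
  { x | ∀ k : Fin n,
      schubertSigma (Grassmann.rangeOf 𝕜 x) (basisFlag 𝕜 b) ((k : ℕ) + 1) = (σ k : ℕ) + 1 }

/-- Composition of inner-product-preserving maps. -/
def scomp {n q : ℕ} {N : Type*} [NormedAddCommGroup N] [InnerProductSpace 𝕜 N]
    (v : Stiefel 𝕜 q N) (u : Stiefel 𝕜 n (EuclideanSpace 𝕜 (Fin q))) : Stiefel 𝕜 n N :=
  ⟨v.1.comp u.1, fun x y => by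
    simp only [ContinuousLinearMap.comp_apply]
    rw [v.2, u.2]⟩

/-- The identity as an inner-product-preserving map. -/
def sid (n : ℕ) : Stiefel 𝕜 n (EuclideanSpace 𝕜 (Fin n)) :=
  ⟨ContinuousLinearMap.id 𝕜 _, fun _ _ => rfl⟩


section Chains

variable (𝕜 : Type*) [RCLike 𝕜]

/-- Iterated composition `u_{j-1} ∘ ⋯ ∘ u_1 ∘ u_0` of a chain of
inner-product-preserving maps (`0`-based). -/
def chainComp (m : ℕ → ℕ)
    (u : ∀ i : ℕ, Stiefel 𝕜 (m i) (EuclideanSpace 𝕜 (Fin (m (i+1))))) :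
    (j : ℕ) → Stiefel 𝕜 (m 0) (EuclideanSpace 𝕜 (Fin (m j)))
  | 0 => sid 𝕜 (m 0)
  | (j+1) => scomp 𝕜 (u j) (chainComp m u j)

/-- Iterated composition `τ_{j-1} ∘ ⋯ ∘ τ_1 ∘ τ_0` of a chain of Schubert symbols. -/
def symbComp (m : ℕ → ℕ) (τ : ∀ i : ℕ, Fin (m i) → Fin (m (i+1))) :
    (j : ℕ) → Fin (m 0) → Fin (m j)
  | 0 => id
  | (j+1) => τ j ∘ symbComp m τ j

end Chains

section Flags

variable (𝕜 : Type*) [RCLike 𝕜]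

/-- The generalized Stiefel manifold `V(n₁,…,n_q,H)` (with `q = Q+1`,
`nn k = n_{k+1}` 0-based): tuples of isometric embeddings with nested images. -/
abbrev FlagStiefel (nn : ℕ → ℕ) (Q : ℕ) (H : Type*) [NormedAddCommGroup H]
    [InnerProductSpace 𝕜 H] : Type _ :=
  { v : ∀ k : Fin (Q+1), Stiefel 𝕜 (nn k.1) H //
      ∀ k l : Fin (Q+1), k ≤ l → LinearMap.range ((v k).1 : EuclideanSpace 𝕜 (Fin (nn k.1)) →ₗ[𝕜] H) ≤
        LinearMap.range ((v l).1 : EuclideanSpace 𝕜 (Fin (nn l.1)) →ₗ[𝕜] H) }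

/-- A general Schubert symbol of type `(n₁,…,n_q, n)` (with `q = Q+1`,
`nn k = n_{k+1}` 0-based and `nn (Q+1) = n`). -/
abbrev SymbolFamily (nn : ℕ → ℕ) (Q : ℕ) : Type _ :=
  ∀ k : Fin (Q+1), Fin (nn k.1) → Fin (nn (k.1+1))

/-- The dimension `d(σ) = Σ_k Σ_i (σ_k(i) − i)` of a general Schubert symbol. -/
def dGen {nn : ℕ → ℕ} {Q : ℕ} (σ : SymbolFamily nn Q) : ℕ :=
  ∑ k : Fin (Q+1), ∑ i : Fin (nn k.1), ((σ k i : ℕ) - (i : ℕ))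

/-- The cell `V_σ(n₁,…,n_q,H)`: the image under the composition homeomorphism `ψ`
of the product of the cells `V_{σ_k}(n_k, n_{k+1})` and `V_{σ_q}(n_q, H)`. -/
def GenVCell (nn : ℕ → ℕ) (Q : ℕ) {H : Type*} [NormedAddCommGroup H]
    [InnerProductSpace 𝕜 H] (b : OrthonormalBasis (Fin (nn (Q+1))) 𝕜 H)
    (σ : SymbolFamily nn Q) : Set (FlagStiefel 𝕜 nn Q H) :=
  { v | v.1 (Fin.last Q) ∈ VCell 𝕜 b (σ (Fin.last Q)) ∧
      ∃ u : ∀ k : ℕ, Stiefel 𝕜 (nn k) (EuclideanSpace 𝕜 (Fin (nn (k+1)))),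
        (∀ (k : ℕ) (h : k < Q),
            u k ∈ VCell 𝕜 (EuclideanSpace.basisFun (Fin (nn (k+1))) 𝕜)
              (σ ⟨k, Nat.lt_succ_of_lt h⟩)) ∧
        ∀ (k : ℕ) (h : k < Q),
          v.1 ⟨k, Nat.lt_succ_of_lt h⟩ = scomp 𝕜 (v.1 ⟨k+1, Nat.succ_lt_succ h⟩) (u k) }

/-- The flag manifold `G(n₁,…,n_q,H)` as a subspace of the product of Grassmannians. -/
abbrev FlagManifold (nn : ℕ → ℕ) (Q : ℕ) (H : Type*) [NormedAddCommGroup H]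
    [InnerProductSpace 𝕜 H] : Type _ :=
  { x : ∀ k : Fin (Q+1), Grassmann 𝕜 (nn k.1) H //
      ∀ k l : Fin (Q+1), k ≤ l → Grassmann.rangeOf 𝕜 (x k) ≤ Grassmann.rangeOf 𝕜 (x l) }

/-- The quotient map `p(n₁,…,n_q,H) : V(n₁,…,n_q,H) → G(n₁,…,n_q,H)`. -/
def flagQuot (nn : ℕ → ℕ) (Q : ℕ) {H : Type*} [NormedAddCommGroup H]
    [InnerProductSpace 𝕜 H] (v : FlagStiefel 𝕜 nn Q H) : FlagManifold 𝕜 nn Q H :=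
  ⟨fun k => Quotient.mk (grassmannSetoid 𝕜 (nn k.1) H) (v.1 k), fun k l h => v.2 k l h⟩

end Flags

section Induced

variable {K W : Type*} [Ring K] [AddCommGroup W] [Module K W]

/-- Iterated induced flags: `indFlag Q F0 Xn 0 = F0` is the complete flag on the
ambient space, and `indFlag Q F0 Xn (j+1)` is the complete flag induced on
`Xn (Q-j)` by the flag `indFlag Q F0 Xn j` on the next space. -/
def indFlag (Q : ℕ) (F0 : ℕ → Submodule K W) (Xn : ℕ → Submodule K W) :
    ℕ → ℕ → Submodule K W
  | 0 => F0
  | (j+1) => fun i =>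
      Xn (Q - j) ⊓ indFlag Q F0 Xn j (schubertSigma (Xn (Q - j)) (indFlag Q F0 Xn j) i)

/-- The `k`-th component of the Schubert symbol of the flag `Xn`: the Schubert symbol of
`Xn k` inside the completely flagged space `Xn (k+1)` (the ambient space when `k = Q`). -/
def flagSymbol (Q : ℕ) (F0 : ℕ → Submodule K W) (Xn : ℕ → Submodule K W) (k i : ℕ) : ℕ :=
  schubertSigma (Xn k) (indFlag Q F0 Xn (Q - k)) i

end Induced

section FlagCells

variable (𝕜 : Type*) [RCLike 𝕜]

/-- A tuple of submodules, extended by `⊤` (the ambient space) beyond index `Q`. -/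
def tupleExt {Q : ℕ} {H : Type*} [NormedAddCommGroup H] [InnerProductSpace 𝕜 H]
    (Xt : ∀ _ : Fin (Q+1), Submodule 𝕜 H) (j : ℕ) : Submodule 𝕜 H :=
  if h : j < Q + 1 then Xt ⟨j, h⟩ else ⊤

/-- The set `G(n₁,…,n_q,H)` of flags, as tuples of submodules. -/
def GFlagSet (nn : ℕ → ℕ) (Q : ℕ) (H : Type*) [NormedAddCommGroup H]
    [InnerProductSpace 𝕜 H] : Set (∀ _ : Fin (Q+1), Submodule 𝕜 H) :=
  { Xt | (∀ k : Fin (Q+1), Module.finrank 𝕜 ↥(Xt k) = nn k.1) ∧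
      ∀ k l : Fin (Q+1), k ≤ l → Xt k ≤ Xt l }

/-- The Schubert cell `G_σ(n₁,…,n_q,H)`, as a set of tuples of submodules. -/
def GFlagCellSub (nn : ℕ → ℕ) (Q : ℕ) {H : Type*} [NormedAddCommGroup H]
    [InnerProductSpace 𝕜 H] (b : OrthonormalBasis (Fin (nn (Q+1))) 𝕜 H)
    (σ : SymbolFamily nn Q) : Set (∀ _ : Fin (Q+1), Submodule 𝕜 H) :=
  { Xt | Xt ∈ GFlagSet 𝕜 nn Q H ∧
      ∀ (k : Fin (Q+1)) (i : Fin (nn k.1)),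
        flagSymbol Q (basisFlag 𝕜 b) (tupleExt 𝕜 Xt) k.1 (i.1+1) = (σ k i : ℕ) + 1 }

/-- The Schubert cell `G_σ(n₁,…,n_q,H)` as a subset of the flag manifold. -/
def GFlagCellQ (nn : ℕ → ℕ) (Q : ℕ) {H : Type*} [NormedAddCommGroup H]
    [InnerProductSpace 𝕜 H] (b : OrthonormalBasis (Fin (nn (Q+1))) 𝕜 H)
    (σ : SymbolFamily nn Q) : Set (FlagManifold 𝕜 nn Q H) :=
  { x | ∀ (k : Fin (Q+1)) (i : Fin (nn k.1)),
      flagSymbol Q (basisFlag 𝕜 b)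
        (tupleExt 𝕜 (fun l => Grassmann.rangeOf 𝕜 (x.1 l))) k.1 (i.1+1) = (σ k i : ℕ) + 1 }

end FlagCells

section SchubertAux

variable {𝕜 : Type*} [RCLike 𝕜]

lemma basisFun_coe (q : ℕ) :
    ⇑(EuclideanSpace.basisFun (Fin q) 𝕜) = fun i => EuclideanSpace.single i (1 : 𝕜) :=
  funext fun i => by simp [EuclideanSpace.basisFun_apply]

lemma mem_span_single_iff {q : ℕ} (S : Set (Fin q)) (x : EuclideanSpace 𝕜 (Fin q)) :
    x ∈ Submodule.span 𝕜 ((fun i => EuclideanSpace.single i (1 : 𝕜)) '' S) ↔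
      ∀ j ∉ S, x j = 0 := by
  constructor
  · intro hx j hj
    induction hx using Submodule.span_induction with
    | mem y hy =>
      obtain ⟨i, hiS, rfl⟩ := hy
      simp only
      rw [EuclideanSpace.single_apply]
      simp only [ite_eq_right_iff]
      rintro rfl; exact absurd hiS hj
    | zero => rfl
    | add y z _ _ hy hz => simp only [PiLp.add_apply] at *; rw [hy, hz, add_zero]
    | smul c y _ hy => simp only [PiLp.smul_apply] at *; rw [hy, smul_zero]
  · intro h
    classical
    have hx : x = ∑ j, x j • EuclideanSpace.single j (1 : 𝕜) := by
      conv_lhs => rw [← (EuclideanSpace.basisFun (Fin q) 𝕜).sum_repr x]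
      refine Finset.sum_congr rfl fun j _ => by
        rw [EuclideanSpace.basisFun_repr, EuclideanSpace.basisFun_apply]
    have : x = ∑ j ∈ Finset.univ.filter (· ∈ S), x j • EuclideanSpace.single j (1 : 𝕜) := by
      conv_lhs => rw [hx]
      symm
      refine Finset.sum_subset (Finset.filter_subset _ _) fun j _ hj => ?_
      have : j ∉ S := by simpa using hj
      rw [h j this, zero_smul]
    rw [this]
    refine Submodule.sum_mem _ fun j hj => Submodule.smul_mem _ _ (Submodule.subset_span ?_)
    exact ⟨j, by simpa using hj, rfl⟩

lemma inner_eq_zero_of_mem_span {m : ℕ} {N : Type*} [NormedAddCommGroup N]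
    [InnerProductSpace 𝕜 N] (b : OrthonormalBasis (Fin m) 𝕜 N) {S : Set (Fin m)}
    {t : Fin m} (ht : t ∉ S) {y : N} (hy : y ∈ Submodule.span 𝕜 (⇑b '' S)) :
    (inner 𝕜 y (b t) : 𝕜) = 0 := by
  induction hy using Submodule.span_induction with
  | mem z hz =>
    obtain ⟨i, hiS, rfl⟩ := hz
    exact b.orthonormal.2 (fun h => ht (h ▸ hiS))
  | zero => exact inner_zero_left _
  | add y z _ _ hy hz => rw [inner_add_left, hy, hz, add_zero]
  | smul c y _ hy => rw [inner_smul_left, hy, mul_zero]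

lemma Ek_eq_span_image (n : ℕ) (k : Fin n) :
    Ek 𝕜 n k =
      Submodule.span 𝕜 ((fun i => EuclideanSpace.single i (1 : 𝕜)) '' {i : Fin n | i ≤ k}) := by
  unfold Ek
  congr 1
  ext x
  constructor
  · rintro ⟨i, hi, rfl⟩; exact ⟨i, hi, rfl⟩
  · rintro ⟨i, hi, rfl⟩; exact ⟨i, hi, rfl⟩

/-- The closed conditions defining the closure of a Schubert cell. -/
def ClosedVCell {n m : ℕ} {N : Type*} [NormedAddCommGroup N] [InnerProductSpace 𝕜 N]
    (b : OrthonormalBasis (Fin m) 𝕜 N) (σ : Fin n → Fin m) : Set (Stiefel 𝕜 n N) :=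
  { u | ∀ k : Fin n,
      (∀ x ∈ Ek 𝕜 n k, u.1 x ∈ Submodule.span 𝕜 (⇑b '' {j : Fin m | j ≤ σ k})) ∧
      ∃ r : ℝ, 0 ≤ r ∧ (inner 𝕜 (u.1 (EuclideanSpace.single k (1 : 𝕜))) (b (σ k)) : 𝕜) = (r : 𝕜) }

lemma isClosed_ClosedVCell {n mN : ℕ} {N : Type*} [NormedAddCommGroup N]
    [InnerProductSpace 𝕜 N] (b : OrthonormalBasis (Fin mN) 𝕜 N) (σ : Fin n → Fin mN) :
    IsClosed (ClosedVCell b σ) := by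
  have hset : ClosedVCell b σ =
      (⋂ k : Fin n, ⋂ x ∈ (Ek 𝕜 n k : Set (EuclideanSpace 𝕜 (Fin n))),
        {u : Stiefel 𝕜 n N | u.1 x ∈ Submodule.span 𝕜 (⇑b '' {j : Fin mN | j ≤ σ k})}) ∩
      (⋂ k : Fin n, {u : Stiefel 𝕜 n N |
        (inner 𝕜 (u.1 (EuclideanSpace.single k (1 : 𝕜))) (b (σ k)) : 𝕜) ∈
          {z : 𝕜 | RCLike.im z = 0 ∧ 0 ≤ RCLike.re z}}) := by
    ext u
    simp only [ClosedVCell, Set.mem_setOf_eq, Set.mem_inter_iff, Set.mem_iInter, SetLike.mem_coe]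
    constructor
    · intro h
      refine ⟨fun k x hx => (h k).1 x hx, fun k => ?_⟩
      obtain ⟨r, hr, he⟩ := (h k).2
      rw [he]
      exact ⟨RCLike.ofReal_im r, by simpa using hr⟩
    · rintro ⟨h1, h2⟩ k
      refine ⟨h1 k, ?_⟩
      obtain ⟨him, hre⟩ := h2 k
      exact ⟨RCLike.re (inner 𝕜 (u.1 (EuclideanSpace.single k (1 : 𝕜))) (b (σ k)) : 𝕜), hre,
        by apply RCLike.ext <;> simp [him]⟩
  rw [hset]
  have hcont : ∀ x : EuclideanSpace 𝕜 (Fin n), Continuous fun u : Stiefel 𝕜 n N => u.1 x :=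
    fun x => (ContinuousLinearMap.apply 𝕜 N x).continuous.comp continuous_subtype_val
  apply IsClosed.inter
  · refine isClosed_iInter fun k => isClosed_iInter fun x => isClosed_iInter fun _ => ?_
    have hfin : FiniteDimensional 𝕜 (Submodule.span 𝕜 (⇑b '' {j : Fin mN | j ≤ σ k})) :=
      FiniteDimensional.span_of_finite 𝕜 ((Set.toFinite _).image _)
    exact ((Submodule.span 𝕜 (⇑b '' {j : Fin mN | j ≤ σ k})).closed_of_finiteDimensional).preimage
      (hcont x)
  · refine isClosed_iInter fun k => ?_
    have hC : IsClosed {z : 𝕜 | RCLike.im z = 0 ∧ 0 ≤ RCLike.re z} := by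
      have h1 : IsClosed {z : 𝕜 | RCLike.im z = 0} :=
        isClosed_singleton.preimage RCLike.continuous_im
      have h2 : IsClosed {z : 𝕜 | 0 ≤ RCLike.re z} :=
        isClosed_Ici.preimage RCLike.continuous_re
      exact h1.inter h2
    exact hC.preimage ((hcont _).inner continuous_const)

end SchubertAux

section CompAux

variable {𝕜 : Type*} [RCLike 𝕜] {n q mN : ℕ} {N : Type*} [NormedAddCommGroup N]
  [InnerProductSpace 𝕜 N]

lemma map_span_le (b : OrthonormalBasis (Fin mN) 𝕜 N) {τ : Fin q → Fin mN} (hτ : Monotone τ)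
    (v : Stiefel 𝕜 q N)
    (hv : ∀ k : Fin q, ∀ x ∈ Ek 𝕜 q k, v.1 x ∈ Submodule.span 𝕜 (⇑b '' {j : Fin mN | j ≤ τ k}))
    {s : Fin q} {x : EuclideanSpace 𝕜 (Fin q)}
    (hx : x ∈ Submodule.span 𝕜
      ((fun i => EuclideanSpace.single i (1 : 𝕜)) '' {j : Fin q | j ≤ s})) :
    v.1 x ∈ Submodule.span 𝕜 (⇑b '' {j : Fin mN | j ≤ τ s}) := by
  induction hx using Submodule.span_induction with
  | mem y hy =>
    obtain ⟨i, hi, rfl⟩ := hy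
    have h1 : EuclideanSpace.single i (1 : 𝕜) ∈ Ek 𝕜 q i :=
      Submodule.subset_span ⟨i, le_refl i, rfl⟩
    refine Submodule.span_mono (Set.image_mono ?_) (hv i _ h1)
    exact fun j hj => le_trans hj (hτ hi)
  | zero => simp
  | add y z _ _ hy hz => rw [map_add]; exact Submodule.add_mem _ hy hz
  | smul c y _ hy => rw [map_smul]; exact Submodule.smul_mem _ _ hy

lemma map_span_lt (b : OrthonormalBasis (Fin mN) 𝕜 N) {τ : Fin q → Fin mN} (hτ : StrictMono τ)
    (v : Stiefel 𝕜 q N)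
    (hv : ∀ k : Fin q, ∀ x ∈ Ek 𝕜 q k, v.1 x ∈ Submodule.span 𝕜 (⇑b '' {j : Fin mN | j ≤ τ k}))
    {s : Fin q} {x : EuclideanSpace 𝕜 (Fin q)}
    (hx : x ∈ Submodule.span 𝕜
      ((fun i => EuclideanSpace.single i (1 : 𝕜)) '' {j : Fin q | j < s})) :
    v.1 x ∈ Submodule.span 𝕜 (⇑b '' {j : Fin mN | j < τ s}) := by
  induction hx using Submodule.span_induction with
  | mem y hy =>
    obtain ⟨i, hi, rfl⟩ := hy
    have h1 : EuclideanSpace.single i (1 : 𝕜) ∈ Ek 𝕜 q i :=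
      Submodule.subset_span ⟨i, le_refl i, rfl⟩
    refine Submodule.span_mono (Set.image_mono ?_) (hv i _ h1)
    exact fun j hj => lt_of_le_of_lt hj (hτ hi)
  | zero => simp
  | add y z _ _ hy hz => rw [map_add]; exact Submodule.add_mem _ hy hz
  | smul c y _ hy => rw [map_smul]; exact Submodule.smul_mem _ _ hy

lemma inner_comp_eq (b : OrthonormalBasis (Fin mN) 𝕜 N) {τ : Fin q → Fin mN}
    (hτ : StrictMono τ) (v : Stiefel 𝕜 q N)
    (hv : ∀ k : Fin q, ∀ x ∈ Ek 𝕜 q k, v.1 x ∈ Submodule.span 𝕜 (⇑b '' {j : Fin mN | j ≤ τ k}))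
    {s : Fin q} {x : EuclideanSpace 𝕜 (Fin q)}
    (hx : x ∈ Submodule.span 𝕜
      ((fun i => EuclideanSpace.single i (1 : 𝕜)) '' {j : Fin q | j ≤ s})) :
    (inner 𝕜 (v.1 x) (b (τ s)) : 𝕜) =
      (inner 𝕜 x (EuclideanSpace.single s (1 : 𝕜)) : 𝕜) *
        (inner 𝕜 (v.1 (EuclideanSpace.single s (1 : 𝕜))) (b (τ s)) : 𝕜) := by
  have hco : ∀ j ∉ {j : Fin q | j ≤ s}, x j = 0 := (mem_span_single_iff _ _).1 hx
  set y := x - x s • EuclideanSpace.single s (1 : 𝕜) with hy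
  have hys : ∀ j ∉ {j : Fin q | j < s}, y j = 0 := by
    intro j hj
    simp only [Set.mem_setOf_eq, not_lt] at hj
    have hyj : y j = x j - x s * (if j = s then (1 : 𝕜) else 0) := by
      simp [hy, EuclideanSpace.single_apply]
    by_cases hjs : j = s
    · subst hjs; simp [hyj]
    · have hns : ¬ j ≤ s := fun h => hjs (le_antisymm h hj)
      rw [hyj, hco j hns]
      simp [hjs]
  have hymem : y ∈ Submodule.span 𝕜
      ((fun i => EuclideanSpace.single i (1 : 𝕜)) '' {j : Fin q | j < s}) :=
    (mem_span_single_iff _ _).2 hys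
  have h0 : (inner 𝕜 (v.1 y) (b (τ s)) : 𝕜) = 0 :=
    inner_eq_zero_of_mem_span b (S := {j : Fin mN | j < τ s}) (by simp)
      (map_span_lt b hτ v hv hymem)
  have hxsplit : x = y + x s • EuclideanSpace.single s (1 : 𝕜) := by
    rw [hy]; abel
  have hxi : (inner 𝕜 x (EuclideanSpace.single s (1 : 𝕜)) : 𝕜) =
      (starRingEnd 𝕜) (x s) := by
    rw [EuclideanSpace.inner_single_right, one_mul]
  conv_lhs => rw [hxsplit]
  rw [map_add, map_smul, inner_add_left, h0, zero_add, inner_smul_left, hxi]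

lemma scomp_mem_VCell (b : OrthonormalBasis (Fin mN) 𝕜 N) (σ : Fin n → Fin q)
    {τ : Fin q → Fin mN} (hτ : StrictMono τ)
    {u : Stiefel 𝕜 n (EuclideanSpace 𝕜 (Fin q))} {v : Stiefel 𝕜 q N}
    (hu : u ∈ VCell 𝕜 (EuclideanSpace.basisFun (Fin q) 𝕜) σ) (hv : v ∈ VCell 𝕜 b τ) :
    scomp 𝕜 v u ∈ VCell 𝕜 b (τ ∘ σ) := by
  have hv' : ∀ k : Fin q, ∀ x ∈ Ek 𝕜 q k,
      v.1 x ∈ Submodule.span 𝕜 (⇑b '' {j : Fin mN | j ≤ τ k}) := fun k => (hv k).1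
  intro k
  have hux : u.1 (EuclideanSpace.single k (1 : 𝕜)) ∈ Submodule.span 𝕜
      ((fun i => EuclideanSpace.single i (1 : 𝕜)) '' {j : Fin q | j ≤ σ k}) := by
    rw [← basisFun_coe]
    exact (hu k).1 _ (Submodule.subset_span ⟨k, le_refl k, rfl⟩)
  constructor
  · intro x hx
    have hux' : u.1 x ∈ Submodule.span 𝕜
        ((fun i => EuclideanSpace.single i (1 : 𝕜)) '' {j : Fin q | j ≤ σ k}) := by
      rw [← basisFun_coe]
      exact (hu k).1 x hx
    exact map_span_le b hτ.monotone v hv' hux'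
  · obtain ⟨r1, hr1, hi1⟩ := (hu k).2
    obtain ⟨r2, hr2, hi2⟩ := (hv (σ k)).2
    refine ⟨r1 * r2, mul_pos hr1 hr2, ?_⟩
    show (inner 𝕜 (v.1 (u.1 (EuclideanSpace.single k (1 : 𝕜)))) (b ((τ ∘ σ) k)) : 𝕜) = _
    rw [Function.comp_apply, inner_comp_eq b hτ v hv' hux]
    rw [hi2]
    have hi1' : (inner 𝕜 (u.1 (EuclideanSpace.single k (1 : 𝕜)))
        (EuclideanSpace.single (σ k) (1 : 𝕜)) : 𝕜) = (r1 : 𝕜) := by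
      rw [← hi1, EuclideanSpace.basisFun_apply]
    rw [hi1', ← RCLike.ofReal_mul]

lemma mem_VCell_of_scomp (b : OrthonormalBasis (Fin mN) 𝕜 N) (σ : Fin n → Fin q)
    {τ : Fin q → Fin mN} (hτ : StrictMono τ)
    {u : Stiefel 𝕜 n (EuclideanSpace 𝕜 (Fin q))} {v : Stiefel 𝕜 q N}
    (hu : u ∈ ClosedVCell (EuclideanSpace.basisFun (Fin q) 𝕜) σ) (hv : v ∈ VCell 𝕜 b τ)
    (h : scomp 𝕜 v u ∈ VCell 𝕜 b (τ ∘ σ)) :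
    u ∈ VCell 𝕜 (EuclideanSpace.basisFun (Fin q) 𝕜) σ := by
  have hv' : ∀ k : Fin q, ∀ x ∈ Ek 𝕜 q k,
      v.1 x ∈ Submodule.span 𝕜 (⇑b '' {j : Fin mN | j ≤ τ k}) := fun k => (hv k).1
  intro k
  refine ⟨(hu k).1, ?_⟩
  obtain ⟨r1, hr1, hi1⟩ := (hu k).2
  obtain ⟨r2, hr2, hi2⟩ := (hv (σ k)).2
  obtain ⟨r, hr, hi⟩ := (h k).2
  have hux : u.1 (EuclideanSpace.single k (1 : 𝕜)) ∈ Submodule.span 𝕜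
      ((fun i => EuclideanSpace.single i (1 : 𝕜)) '' {j : Fin q | j ≤ σ k}) := by
    rw [← basisFun_coe]
    exact (hu k).1 _ (Submodule.subset_span ⟨k, le_refl k, rfl⟩)
  have hi1' : (inner 𝕜 (u.1 (EuclideanSpace.single k (1 : 𝕜)))
      (EuclideanSpace.single (σ k) (1 : 𝕜)) : 𝕜) = (r1 : 𝕜) := by
    rw [← hi1, EuclideanSpace.basisFun_apply]
  have hcomp : (inner 𝕜 ((scomp 𝕜 v u).1 (EuclideanSpace.single k (1 : 𝕜)))
      (b ((τ ∘ σ) k)) : 𝕜) = ((r1 * r2 : ℝ) : 𝕜) := by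
    show (inner 𝕜 (v.1 (u.1 (EuclideanSpace.single k (1 : 𝕜)))) (b ((τ ∘ σ) k)) : 𝕜) = _
    rw [Function.comp_apply, inner_comp_eq b hτ v hv' hux, hi1', hi2, ← RCLike.ofReal_mul]
  rw [hcomp] at hi
  have hrr : r = r1 * r2 := by exact_mod_cast hi.symm
  have hr1pos : 0 < r1 := by nlinarith
  exact ⟨r1, hr1pos, hi1⟩

end CompAux

section ChainAux

variable {𝕜 : Type*} [RCLike 𝕜]

lemma sid_mem_VCell (n : ℕ) :
    sid 𝕜 n ∈ VCell 𝕜 (EuclideanSpace.basisFun (Fin n) 𝕜) (id : Fin n → Fin n) := by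
  intro k
  constructor
  · intro x hx
    show x ∈ _
    rw [basisFun_coe, ← Ek_eq_span_image]
    exact hx
  · refine ⟨1, one_pos, ?_⟩
    show (inner 𝕜 (EuclideanSpace.single k (1 : 𝕜))
      ((EuclideanSpace.basisFun (Fin n) 𝕜) k) : 𝕜) = _
    rw [EuclideanSpace.basisFun_apply, EuclideanSpace.inner_single_right,
      EuclideanSpace.single_apply]
    simp

lemma scomp_assoc {n q p : ℕ} {N : Type*} [NormedAddCommGroup N] [InnerProductSpace 𝕜 N]
    (w : Stiefel 𝕜 p N) (v : Stiefel 𝕜 q (EuclideanSpace 𝕜 (Fin p)))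
    (u : Stiefel 𝕜 n (EuclideanSpace 𝕜 (Fin q))) :
    scomp 𝕜 w (scomp 𝕜 v u) = scomp 𝕜 (scomp 𝕜 w v) u :=
  Subtype.ext rfl

lemma scomp_sid {n : ℕ} {N : Type*} [NormedAddCommGroup N] [InnerProductSpace 𝕜 N]
    (v : Stiefel 𝕜 n N) : scomp 𝕜 v (sid 𝕜 n) = v :=
  Subtype.ext (ContinuousLinearMap.comp_id _)

lemma sid_scomp {n q : ℕ} (u : Stiefel 𝕜 n (EuclideanSpace 𝕜 (Fin q))) :
    scomp 𝕜 (sid 𝕜 q) u = u :=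
  Subtype.ext (ContinuousLinearMap.id_comp _)

lemma symbComp_strictMono (m : ℕ → ℕ) (τ : ∀ i : ℕ, Fin (m i) → Fin (m (i+1))) :
    ∀ j : ℕ, (∀ i, i < j → StrictMono (τ i)) → StrictMono (symbComp m τ j)
  | 0, _ => strictMono_id
  | (j+1), h => (h j (Nat.lt_succ_self j)).comp
      (symbComp_strictMono m τ j fun i hi => h i (Nat.lt_succ_of_lt hi))

lemma chainComp_mem_VCell (m : ℕ → ℕ) (τ : ∀ i : ℕ, Fin (m i) → Fin (m (i+1)))
    (u : ∀ i : ℕ, Stiefel 𝕜 (m i) (EuclideanSpace 𝕜 (Fin (m (i+1))))) :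
    ∀ j : ℕ, (∀ i, i < j → StrictMono (τ i)) →
      (∀ i, i < j → u i ∈ VCell 𝕜 (EuclideanSpace.basisFun (Fin (m (i+1))) 𝕜) (τ i)) →
      chainComp 𝕜 m u j ∈ VCell 𝕜 (EuclideanSpace.basisFun (Fin (m j)) 𝕜) (symbComp m τ j)
  | 0, _, _ => sid_mem_VCell (m 0)
  | (j+1), hs, hu =>
      scomp_mem_VCell _ _ (hs j (Nat.lt_succ_self j))
        (chainComp_mem_VCell m τ u j (fun i hi => hs i (Nat.lt_succ_of_lt hi))
          (fun i hi => hu i (Nat.lt_succ_of_lt hi)))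
        (hu j (Nat.lt_succ_self j))

lemma chainComp_shift (m : ℕ → ℕ)
    (u : ∀ i : ℕ, Stiefel 𝕜 (m i) (EuclideanSpace 𝕜 (Fin (m (i+1))))) :
    ∀ j : ℕ, chainComp 𝕜 m u (j+1) =
      scomp 𝕜 (chainComp 𝕜 (fun i => m (i+1)) (fun i => u (i+1)) j) (u 0)
  | 0 => by
      show scomp 𝕜 (u 0) (sid 𝕜 (m 0)) = scomp 𝕜 (sid 𝕜 (m 1)) (u 0)
      rw [scomp_sid, sid_scomp]
  | (j+1) => by
      show scomp 𝕜 (u (j+1)) (chainComp 𝕜 m u (j+1)) = _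
      rw [chainComp_shift m u j, scomp_assoc]
      rfl

lemma symbComp_shift (m : ℕ → ℕ) (τ : ∀ i : ℕ, Fin (m i) → Fin (m (i+1))) :
    ∀ j : ℕ, symbComp m τ (j+1) =
      (symbComp (fun i => m (i+1)) (fun i => τ (i+1)) j) ∘ τ 0
  | 0 => rfl
  | (j+1) => by
      show τ (j+1) ∘ symbComp m τ (j+1) = _
      rw [symbComp_shift m τ j]
      rfl

end ChainAux

/-- Lemma 5.2: let `φ : V(m₁,m₂) × ⋯ × V(m_{r-1},m_r) × V(m_r,F) → V(m₁,F)` be the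
composition map (here `0`-based: `m 0 = m₁, …, m (r-1) = m_r` and `φ(u,v) = v ∘ u_{r-2} ∘ ⋯ ∘ u_0`).
Then (1) `φ` maps `∏ V_{σ_k}(m_k,m_{k+1}) × V_{σ_r}(m_r,F)` into `V_{σ_r⋯σ₁}(m₁,F)`;
(2) `φ` maps `∂V_{σ₁}(m₁,m₂) × ∏_{k≥2} V_{σ_k}(m_k,m_{k+1}) × V_{σ_r}(m_r,F)` into
`∂V_{σ_r⋯σ₁}(m₁,F)`. -/
theorem composition_maps_schubert_cells
    (𝕜 : Type*) [RCLike 𝕜] (F : Type*) [NormedAddCommGroup F] [InnerProductSpace 𝕜 F]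
    {mF : ℕ} (bF : OrthonormalBasis (Fin mF) 𝕜 F)
    (r : ℕ) (hr : 1 ≤ r) (m : ℕ → ℕ) (h0 : 0 < m 0)
    (hm : ∀ i, i + 1 < r → m i < m (i + 1)) (hlast : m (r - 1) < mF)
    (τ : ∀ i : ℕ, Fin (m i) → Fin (m (i + 1))) (hτ : ∀ i, i + 1 < r → StrictMono (τ i))
    (τl : Fin (m (r - 1)) → Fin mF) (hτl : StrictMono τl) :
    (∀ (u : ∀ i : ℕ, Stiefel 𝕜 (m i) (EuclideanSpace 𝕜 (Fin (m (i + 1)))))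
        (v : Stiefel 𝕜 (m (r - 1)) F),
      (∀ i, i + 1 < r → u i ∈ VCell 𝕜 (EuclideanSpace.basisFun (Fin (m (i + 1))) 𝕜) (τ i)) →
      v ∈ VCell 𝕜 bF τl →
      scomp 𝕜 v (chainComp 𝕜 m u (r - 1)) ∈ VCell 𝕜 bF (τl ∘ symbComp m τ (r - 1))) ∧
    (2 ≤ r →
      ∀ (u : ∀ i : ℕ, Stiefel 𝕜 (m i) (EuclideanSpace 𝕜 (Fin (m (i + 1)))))
        (v : Stiefel 𝕜 (m (r - 1)) F),
      u 0 ∈ closure (VCell 𝕜 (EuclideanSpace.basisFun (Fin (m 1)) 𝕜) (τ 0)) \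
        VCell 𝕜 (EuclideanSpace.basisFun (Fin (m 1)) 𝕜) (τ 0) →
      (∀ i, 1 ≤ i → i + 1 < r →
        u i ∈ VCell 𝕜 (EuclideanSpace.basisFun (Fin (m (i + 1))) 𝕜) (τ i)) →
      v ∈ VCell 𝕜 bF τl →
      scomp 𝕜 v (chainComp 𝕜 m u (r - 1)) ∈
        closure (VCell 𝕜 bF (τl ∘ symbComp m τ (r - 1))) \
          VCell 𝕜 bF (τl ∘ symbComp m τ (r - 1))) := by

  constructor
  · intro u v hu hv
    obtain ⟨s, rfl⟩ : ∃ s, r = s + 1 := ⟨r - 1, by omega⟩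
    have hchain := chainComp_mem_VCell m τ u s (fun i hi => hτ i (by omega))
      (fun i hi => hu i (by omega))
    exact scomp_mem_VCell bF (symbComp m τ s) hτl hchain hv
  · intro hr2 u v hu0 hu hv
    obtain ⟨s, rfl⟩ : ∃ s, r = s + 2 := ⟨r - 2, by omega⟩
    have hchain' : chainComp 𝕜 (fun i => m (i+1)) (fun i => u (i+1)) s ∈
        VCell 𝕜 (EuclideanSpace.basisFun (Fin (m (s+1))) 𝕜)
          (symbComp (fun i => m (i+1)) (fun i => τ (i+1)) s) :=
      chainComp_mem_VCell _ _ _ s (fun i hi => hτ (i+1) (by omega))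
        (fun i hi => hu (i+1) (by omega) (by omega))
    set W := scomp 𝕜 v (chainComp 𝕜 (fun i => m (i+1)) (fun i => u (i+1)) s) with hWdef
    have hWmem : W ∈ VCell 𝕜 bF
        (τl ∘ symbComp (fun i => m (i+1)) (fun i => τ (i+1)) s) :=
      scomp_mem_VCell bF _ hτl hchain' hv
    have hτσ : StrictMono (τl ∘ symbComp (fun i => m (i+1)) (fun i => τ (i+1)) s) :=
      hτl.comp (symbComp_strictMono _ _ s (fun i hi => hτ (i+1) (by omega)))
    have hshift : scomp 𝕜 v (chainComp 𝕜 m u (s+1)) = scomp 𝕜 W (u 0) := by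
      rw [chainComp_shift, scomp_assoc]
    have hsymb : τl ∘ symbComp m τ (s+1) =
        (τl ∘ symbComp (fun i => m (i+1)) (fun i => τ (i+1)) s) ∘ τ 0 := by
      rw [symbComp_shift]
      rfl
    refine ⟨?_, ?_⟩
    · show scomp 𝕜 v (chainComp 𝕜 m u (s+1)) ∈
        closure (VCell 𝕜 bF (τl ∘ symbComp m τ (s+1)))
      have gcont : Continuous
          (fun w : Stiefel 𝕜 (m 0) (EuclideanSpace 𝕜 (Fin (m 1))) => scomp 𝕜 W w) := by
        apply Continuous.subtype_mk
        exact ((ContinuousLinearMap.compSL (EuclideanSpace 𝕜 (Fin (m 0)))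
          (EuclideanSpace 𝕜 (Fin (m 1))) F (RingHom.id 𝕜) (RingHom.id 𝕜)
          W.1).continuous).comp continuous_subtype_val
      have hmapsto : Set.MapsTo (fun w => scomp 𝕜 W w)
          (VCell 𝕜 (EuclideanSpace.basisFun (Fin (m 1)) 𝕜) (τ 0))
          (VCell 𝕜 bF ((τl ∘ symbComp (fun i => m (i+1)) (fun i => τ (i+1)) s) ∘ τ 0)) :=
        fun w hw => scomp_mem_VCell bF (τ 0) hτσ hw hWmem
      rw [hshift, hsymb]
      exact map_mem_closure gcont hu0.1 hmapsto
    · intro hmem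
      have hmem2 : scomp 𝕜 v (chainComp 𝕜 m u (s+1)) ∈
          VCell 𝕜 bF (τl ∘ symbComp m τ (s+1)) := hmem
      rw [hshift, hsymb] at hmem2
      have hu0closed : u 0 ∈ ClosedVCell (EuclideanSpace.basisFun (Fin (m 1)) 𝕜) (τ 0) := by
        have hsub : VCell 𝕜 (EuclideanSpace.basisFun (Fin (m 1)) 𝕜) (τ 0) ⊆
            ClosedVCell (EuclideanSpace.basisFun (Fin (m 1)) 𝕜) (τ 0) := by
          intro w hw k
          obtain ⟨rr, hrr, he⟩ := (hw k).2
          exact ⟨(hw k).1, rr, le_of_lt hrr, he⟩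
        exact closure_minimal hsub (isClosed_ClosedVCell _ _) hu0.1
      exact hu0.2 (mem_VCell_of_scomp _ (τ 0) hτσ hu0closed hWmem hmem2)
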